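/- Let q be an odd prime power. The number of points in ℙ³(F_q) on the surface x₀³x₁ + x₁³x₂ + x₂³x₃ + x₃⁴ = 27ψ x₀x₁x₂x₃ having at least one coordinate equal to zero is: 5q − 2 if q ≢ 1 (mod 3); and 7q − 4 if q ≡ 1 (mod 3) but q ≢ 1 (mod 9). (For q ≡ 1 (mod 9) there is an additional correction term expressed in Gauss sums.) -/

import Mathlib

/-- The defining polynomial of the `C4` pencil `x₀³x₁ + x₁³x₂ + x₂³x₃ + x₃⁴ - 27ψx₀x₁x₂x₃`. -/
def fC4 {F : Type} [Field F] (ψ : F) (x : Fin 4 → F) : F :=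
  x 0 ^ 3 * x 1 + x 1 ^ 3 * x 2 + x 2 ^ 3 * x 3 + x 3 ^ 4 -
    27 * ψ * (x 0 * x 1 * x 2 * x 3)

/-- The points of the `C4` pencil in `ℙ³(F_q)` having at least one zero coordinate. -/
def C4boundary (F : Type) [Field F] [Fintype F] (ψ : F) :
    Set (Projectivization F (Fin 4 → F)) :=
  {P | fC4 ψ P.rep = 0 ∧ ∃ j, P.rep j = 0}

namespace C4Aux

open Finset

attribute [local instance] Classical.propDecidable

variable {F : Type} [Field F] [Fintype F]

lemma card_two {a b : F} (hab : a ≠ b) :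
    Fintype.card {x : F // x = a ∨ x = b} = 2 := by
  rw [Fintype.card_subtype]
  have h : (univ.filter fun x : F => x = a ∨ x = b) = {a, b} := by
    ext x; simp
  rw [h, Finset.card_insert_of_notMem (by simp [hab]), Finset.card_singleton]

lemma card_three {a b c : F} (hab : a ≠ b) (hac : a ≠ c) (hbc : b ≠ c) :
    Fintype.card {x : F // x = a ∨ x = b ∨ x = c} = 3 := by
  rw [Fintype.card_subtype]
  have h : (univ.filter fun x : F => x = a ∨ x = b ∨ x = c) = {a, b, c} := by
    ext x; simp
  rw [h, Finset.card_insert_of_notMem (by simp [hab, hac]),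
    Finset.card_insert_of_notMem (by simp [hbc]), Finset.card_singleton]

lemma card_four {a b c d : F} (hab : a ≠ b) (hac : a ≠ c) (had : a ≠ d)
    (hbc : b ≠ c) (hbd : b ≠ d) (hcd : c ≠ d) :
    Fintype.card {x : F // x = a ∨ x = b ∨ x = c ∨ x = d} = 4 := by
  rw [Fintype.card_subtype]
  have h : (univ.filter fun x : F => x = a ∨ x = b ∨ x = c ∨ x = d) = {a, b, c, d} := by
    ext x; simp
  rw [h, Finset.card_insert_of_notMem (by simp [hab, hac, had]),
    Finset.card_insert_of_notMem (by simp [hbc, hbd]),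
    Finset.card_insert_of_notMem (by simp [hcd]), Finset.card_singleton]

lemma cube_roots_of_unity {ζ : F} (h3 : ζ ^ 3 = 1) (h1 : ζ ≠ 1) (z : F) :
    z ^ 3 = 1 ↔ z = 1 ∨ z = ζ ∨ z = ζ ^ 2 := by
  have hs : ζ ^ 2 + ζ + 1 = 0 := by
    have h : (ζ - 1) * (ζ ^ 2 + ζ + 1) = 0 := by linear_combination h3
    rcases mul_eq_zero.mp h with h' | h'
    · exact absurd (sub_eq_zero.mp h') h1
    · exact h'
  constructor
  · intro hz
    have h : (z - 1) * ((z - ζ) * (z - ζ ^ 2)) = 0 := by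
      linear_combination hz + (z - z ^ 2) * hs + (z - 1) * h3
    rcases mul_eq_zero.mp h with h' | h'
    · exact Or.inl (sub_eq_zero.mp h')
    · rcases mul_eq_zero.mp h' with h'' | h''
      · exact Or.inr (Or.inl (sub_eq_zero.mp h''))
      · exact Or.inr (Or.inr (sub_eq_zero.mp h''))
  · rintro (rfl | rfl | rfl)
    · norm_num
    · exact h3
    · linear_combination (ζ ^ 3 + 1) * h3

lemma cube_roots_of_cube {ζ : F} (h3 : ζ ^ 3 = 1) (h1 : ζ ≠ 1) {t : F} (ht : t ≠ 0) (z : F) :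
    z ^ 3 = t ^ 3 ↔ z = t ∨ z = ζ * t ∨ z = ζ ^ 2 * t := by
  have key : (z / t) ^ 3 = 1 ↔ z / t = 1 ∨ z / t = ζ ∨ z / t = ζ ^ 2 :=
    cube_roots_of_unity h3 h1 _
  rw [div_pow, div_eq_one_iff_eq (pow_ne_zero 3 ht), div_eq_iff ht, div_eq_iff ht,
    div_eq_iff ht] at key
  simpa using key

lemma exists_zeta (h3 : Fintype.card F % 3 = 1) : ∃ ζ : F, ζ ^ 3 = 1 ∧ ζ ≠ 1 := by
  have h2 : 2 ≤ Fintype.card F := Fintype.one_lt_card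
  have hdvd : 3 ∣ Fintype.card Fˣ := by
    rw [Fintype.card_units]; omega
  have : Fact (Nat.Prime 3) := ⟨by norm_num⟩
  obtain ⟨u, hu⟩ := exists_prime_orderOf_dvd_card 3 hdvd
  refine ⟨(u : F), ?_, ?_⟩
  · have h : u ^ 3 = 1 := by rw [← hu]; exact pow_orderOf_eq_one u
    have := congrArg Units.val h
    push_cast at this
    exact this
  · intro h
    have : u = 1 := Units.ext h
    rw [this, orderOf_one] at hu; omega

lemma cube_bijective (h3 : Fintype.card F % 3 ≠ 1) :
    Function.Bijective (fun x : F => x ^ 3) := by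
  rw [Fintype.bijective_iff_injective_and_card]
  refine ⟨fun x y hxy => ?_, rfl⟩
  simp only at hxy
  by_cases hy : y = 0
  · subst hy
    have h0 : x ^ 3 = 0 := by simpa using hxy
    exact (pow_eq_zero_iff (n := 3) (by norm_num)).mp h0
  · have hx : x ≠ 0 := by
      intro hx; subst hx
      have h0 : y ^ 3 = 0 := by simpa using hxy.symm
      exact hy ((pow_eq_zero_iff (n := 3) (by norm_num)).mp h0)
    set u : Fˣ := Units.mk0 x hx
    set v : Fˣ := Units.mk0 y hy
    have huv : (u * v⁻¹) ^ 3 = 1 := by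
      apply Units.ext
      push_cast
      field_simp [u, v]
      simp only [u, v, Units.val_mk0]
      rw [div_eq_one_iff_eq (pow_ne_zero 3 hy)]
      exact hxy
    have hdvd : orderOf (u * v⁻¹) ∣ 3 := orderOf_dvd_iff_pow_eq_one.mpr huv
    have hdvd2 : orderOf (u * v⁻¹) ∣ Fintype.card Fˣ := orderOf_dvd_card
    rw [Fintype.card_units] at hdvd2
    have h2 : 2 ≤ Fintype.card F := Fintype.one_lt_card
    have ho : orderOf (u * v⁻¹) = 1 := by
      have h1 := orderOf_pos (u * v⁻¹)
      have hle : orderOf (u * v⁻¹) ≤ 3 := Nat.le_of_dvd (by norm_num) hdvd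
      interval_cases h : orderOf (u * v⁻¹) <;> omega
    have : u * v⁻¹ = 1 := orderOf_eq_one_iff.mp ho
    have : u = v := by
      rw [mul_inv_eq_one] at this; exact this
    have := congrArg Units.val this
    simpa [u, v] using this

lemma ninth_root_cube (h3 : Fintype.card F % 3 = 1) (h9 : Fintype.card F % 9 ≠ 1)
    {z : F} (hz : z ^ 9 = 1) : z ^ 3 = 1 := by
  have hz0 : z ≠ 0 := by
    intro h; subst h; simp at hz
  set u : Fˣ := Units.mk0 z hz0
  have hu9 : u ^ 9 = 1 := by
    apply Units.ext; push_cast; simpa [u] using hz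
  have hdvd : orderOf u ∣ 9 := orderOf_dvd_iff_pow_eq_one.mpr hu9
  have hdvd2 : orderOf u ∣ Fintype.card Fˣ := orderOf_dvd_card
  rw [Fintype.card_units] at hdvd2
  have h2 : 2 ≤ Fintype.card F := Fintype.one_lt_card
  have ho : orderOf u ∣ 3 := by
    have h1 := orderOf_pos u
    have h9' : orderOf u ≠ 9 := by
      intro h
      rw [h] at hdvd2
      omega
    have hle : orderOf u ≤ 9 := Nat.le_of_dvd (by norm_num) hdvd
    interval_cases h : orderOf u <;> omega
  have : u ^ 3 = 1 := orderOf_dvd_iff_pow_eq_one.mp ho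
  have := congrArg Units.val this
  push_cast at this
  simpa [u] using this

lemma exists_ninth_power (h3 : Fintype.card F % 3 = 1) (h9 : Fintype.card F % 9 ≠ 1)
    {t : F} (ht : t ≠ 0) : ∃ w₀ : F, w₀ ≠ 0 ∧ w₀ ^ 9 = t ^ 3 := by
  have h2 : 2 ≤ Fintype.card F := Fintype.one_lt_card
  set n : ℕ := Fintype.card F - 1 with hn
  have hgcd : Nat.gcd 9 n = 3 := by
    have hd3 : 3 ∣ n := by omega
    have hd9 : ¬ 9 ∣ n := by omega
    have hg9 : Nat.gcd 9 n ∣ 9 := Nat.gcd_dvd_left 9 n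
    have hgn : Nat.gcd 9 n ∣ n := Nat.gcd_dvd_right 9 n
    have h3g : 3 ∣ Nat.gcd 9 n := Nat.dvd_gcd (by norm_num) hd3
    have hle : Nat.gcd 9 n ≤ 9 := Nat.le_of_dvd (by norm_num) hg9
    interval_cases h : Nat.gcd 9 n <;> omega
  have hbez := Nat.gcd_eq_gcd_ab 9 n
  rw [hgcd] at hbez
  set A := Nat.gcdA 9 n
  set B := Nat.gcdB 9 n
  set tu : Fˣ := Units.mk0 t ht with htu
  have hcard : tu ^ (n : ℤ) = 1 := by
    rw [zpow_natCast, hn, ← Fintype.card_units]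
    exact pow_card_eq_one
  have hbez' : (3 : ℤ) = 9 * A + (n : ℤ) * B := by exact_mod_cast hbez
  have key : (tu ^ A) ^ (9 : ℤ) = tu ^ (3 : ℤ) := by
    rw [← zpow_mul, show A * 9 = 3 - (n : ℤ) * B from by linarith,
      zpow_sub, zpow_mul, hcard, one_zpow, inv_one, mul_one]
  refine ⟨t ^ (A : ℤ), zpow_ne_zero _ ht, ?_⟩
  have hk := congrArg Units.val key
  push_cast at hk
  simp only [htu, Units.val_mk0] at hk
  rw [← zpow_natCast (t ^ (A:ℤ)) 9, ← zpow_natCast t 3]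
  exact_mod_cast hk

lemma disjoint_pred {α : Type} {p q : α → Prop} (h : ∀ x, p x → q x → False) :
    Disjoint p q := by
  rw [disjoint_iff_inf_le]
  intro x hx
  exact h x hx.1 hx.2

/-- Solution condition for the open curve count: `u ≠ 0, w ≠ 0, w³u + u³ + 1 = 0`. -/
abbrev Wc (p : F × F) : Prop := p.1 ≠ 0 ∧ p.2 ≠ 0 ∧ p.2 ^ 3 * p.1 + p.1 ^ 3 + 1 = 0

lemma card_W_one (h3 : Fintype.card F % 3 ≠ 1) :
    Fintype.card {p : F × F // Wc p} = Fintype.card F - 2 := by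
  have hbij := cube_bijective (F := F) h3
  have e : {p : F × F // Wc p} ≃ {u : F // ¬(u = 0 ∨ u ^ 3 + 1 = 0)} := by
    refine Equiv.ofBijective (fun p => ⟨p.1.1, ?_⟩) ⟨?_, ?_⟩
    · obtain ⟨⟨u, w⟩, hu, hw, heq⟩ := p
      rintro (h | h)
      · exact hu h
      · have h0 : w ^ 3 * u = 0 := by linear_combination heq - h
        rcases mul_eq_zero.mp h0 with h' | h'
        · exact hw ((pow_eq_zero_iff (by norm_num)).mp h')
        · exact hu h'
    · rintro ⟨⟨u, w⟩, hu, hw, heq⟩ ⟨⟨u', w'⟩, hu', hw', heq'⟩ h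
      simp only [Subtype.mk.injEq] at h
      subst h
      have hww : w ^ 3 = w' ^ 3 := by
        have h1 : w ^ 3 * u = w' ^ 3 * u := by linear_combination heq - heq'
        exact mul_right_cancel₀ hu h1
      have hw'' : w = w' := hbij.1 hww
      subst hw''
      rfl
    · rintro ⟨u, h⟩
      push_neg at h
      obtain ⟨hu, h1⟩ := h
      obtain ⟨w, hw3⟩ := hbij.2 (-(u ^ 3 + 1) / u)
      simp only at hw3
      have hw0 : w ≠ 0 := by
        intro h0
        rw [h0] at hw3
        have hne : -(u ^ 3 + 1) / u ≠ 0 := div_ne_zero (neg_ne_zero.mpr h1) hu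
        exact hne (by rw [← hw3]; norm_num)
      refine ⟨⟨(u, w), hu, hw0, ?_⟩, rfl⟩
      rw [hw3]
      field_simp
      ring
  rw [Fintype.card_congr e, Fintype.card_subtype_compl]
  congr 1
  have e2 : {u : F // u = 0 ∨ u ^ 3 + 1 = 0} ≃ {u : F // u = 0 ∨ u = -1} := by
    refine Equiv.subtypeEquiv (Equiv.refl F) fun u => ?_
    simp only [Equiv.refl_apply]
    constructor
    · rintro (h | h)
      · exact Or.inl h
      · refine Or.inr (hbij.1 ?_)
        simp only
        linear_combination h
    · rintro (h | h)
      · exact Or.inl h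
      · subst h; right; ring
  rw [Fintype.card_congr e2,
    card_two (fun h => absurd h.symm (neg_ne_zero.mpr one_ne_zero))]

lemma zeta_facts {ζ : F} (hz3 : ζ ^ 3 = 1) (hz1 : ζ ≠ 1) :
    ζ ≠ 0 ∧ ζ ^ 2 ≠ 1 ∧ ζ ≠ ζ ^ 2 := by
  have hz0 : ζ ≠ 0 := by
    intro h; rw [h] at hz3; norm_num at hz3
  have hz21 : ζ ^ 2 ≠ 1 := by
    intro h
    exact hz1 (by linear_combination hz3 - ζ * h)
  refine ⟨hz0, hz21, fun h => hz21 ?_⟩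
  calc ζ ^ 2 = ζ * ζ := by ring
  _ = ζ * ζ ^ 2 := by nth_rewrite 2 [h]; rfl
  _ = 1 := by linear_combination hz3

lemma card_cube_roots_neg_one {ζ : F} (hz3 : ζ ^ 3 = 1) (hz1 : ζ ≠ 1) :
    Fintype.card {z : F // z ^ 3 = -1} = 3 := by
  obtain ⟨hz0, hz21, hzz⟩ := zeta_facts hz3 hz1
  have e : {z : F // z ^ 3 = -1} ≃ {z : F // z = -1 ∨ z = -ζ ∨ z = -(ζ ^ 2)} := by
    refine Equiv.subtypeEquiv (Equiv.refl F) fun z => ?_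
    simp only [Equiv.refl_apply]
    have h := cube_roots_of_cube hz3 hz1 (t := -1) (neg_ne_zero.mpr one_ne_zero) z
    norm_num at h
    exact h
  rw [Fintype.card_congr e]
  refine card_three ?_ ?_ ?_
  · intro h; exact hz1 (by linear_combination h)
  · intro h; exact hz21 (by linear_combination h)
  · intro h; exact hzz (by linear_combination -h)

lemma card_nine (h3 : Fintype.card F % 3 = 1) (h9 : Fintype.card F % 9 ≠ 1)
    {ζ : F} (hz3 : ζ ^ 3 = 1) (hz1 : ζ ≠ 1) {t : F} (ht : t ≠ 0) :
    Fintype.card {w : F // w ^ 9 = t ^ 3} = 3 := by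
  obtain ⟨hz0, hz21, hzz⟩ := zeta_facts hz3 hz1
  obtain ⟨w₀, hw₀0, hw₀⟩ := exists_ninth_power h3 h9 ht
  have hz9 : ζ ^ 9 = 1 := by
    calc ζ ^ 9 = (ζ ^ 3) ^ 3 := by ring
    _ = 1 := by rw [hz3]; norm_num
  have e : {w : F // w ^ 9 = t ^ 3} ≃ {w : F // w = w₀ ∨ w = ζ * w₀ ∨ w = ζ ^ 2 * w₀} := by
    refine Equiv.subtypeEquiv (Equiv.refl F) fun w => ?_
    simp only [Equiv.refl_apply]
    constructor
    · intro h
      have hq : (w / w₀) ^ 9 = 1 := by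
        rw [div_pow, h, ← hw₀]
        exact div_self (pow_ne_zero 9 hw₀0)
      have hq3 := ninth_root_cube h3 h9 hq
      have := (cube_roots_of_unity hz3 hz1 (w / w₀)).mp hq3
      rcases this with h' | h' | h'
      · left; field_simp at h'; exact h'
      · right; left; rw [div_eq_iff hw₀0] at h'; exact h'
      · right; right; rw [div_eq_iff hw₀0] at h'; exact h'
    · rintro (rfl | rfl | rfl)
      · exact hw₀
      · rw [mul_pow, hz9, one_mul]; exact hw₀
      · rw [mul_pow, show (ζ ^ 2) ^ 9 = (ζ ^ 9) ^ 2 from by ring, hz9, one_pow, one_mul]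
        exact hw₀
  rw [Fintype.card_congr e]
  refine card_three ?_ ?_ ?_
  · intro h
    exact hz1 (mul_right_cancel₀ hw₀0 (show (1:F) * w₀ = ζ * w₀ by rw [one_mul]; exact h)).symm
  · intro h
    exact hz21 (mul_right_cancel₀ hw₀0
      (show (1:F) * w₀ = ζ ^ 2 * w₀ by rw [one_mul]; exact h)).symm
  · intro h
    exact hzz (mul_right_cancel₀ hw₀0 h)

lemma cube_eq_neg_one_iff {ζ : F} (hz3 : ζ ^ 3 = 1) (hz1 : ζ ≠ 1) (z : F) :
    z ^ 3 = -1 ↔ z = -1 ∨ z = -ζ ∨ z = -ζ ^ 2 := by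
  have h := cube_roots_of_cube hz3 hz1 (t := -1) (neg_ne_zero.mpr one_ne_zero) z
  norm_num at h
  exact h

lemma card_W_two (h3 : Fintype.card F % 3 = 1) (h9 : Fintype.card F % 9 ≠ 1) :
    Fintype.card {p : F × F // Wc p} = Fintype.card F - 4 := by
  obtain ⟨ζ, hz3, hz1⟩ := exists_zeta h3
  obtain ⟨hz0, hz21, hzz⟩ := zeta_facts hz3 hz1
  set s : F → ℕ := fun u =>
    Fintype.card {w : F // u ≠ 0 ∧ w ≠ 0 ∧ w ^ 3 * u + u ^ 3 + 1 = 0} with hs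
  have hW : Fintype.card {p : F × F // Wc p} = ∑ u : F, s u := by
    rw [← Fintype.card_sigma]
    exact Fintype.card_congr
      (Equiv.subtypeProdEquivSigmaSubtype
        (fun (u w : F) => u ≠ 0 ∧ w ≠ 0 ∧ w ^ 3 * u + u ^ 3 + 1 = 0))
  have hs_eq : ∀ v : F, v ≠ 0 → v ^ 3 + 1 ≠ 0 →
      s v = Fintype.card {w : F // w ^ 3 = -(v ^ 3 + 1) / v} := by
    intro v hv h1
    apply Fintype.card_congr
    refine Equiv.subtypeEquiv (Equiv.refl F) fun w => ?_
    simp only [Equiv.refl_apply]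
    constructor
    · rintro ⟨-, hw, heq⟩
      field_simp
      linear_combination heq
    · intro h
      have hw : w ≠ 0 := by
        intro h0
        rw [h0] at h
        have hne : -(v ^ 3 + 1) / v ≠ 0 := div_ne_zero (neg_ne_zero.mpr h1) hv
        exact hne (by rw [← h]; norm_num)
      refine ⟨hv, hw, ?_⟩
      field_simp at h
      linear_combination h
  have key : ∀ u : F, s u + s (ζ * u) + s (ζ ^ 2 * u)
      = if u ≠ 0 ∧ u ^ 3 + 1 ≠ 0 then 3 else 0 := by
    intro u
    by_cases hu : u = 0
    · subst hu
      rw [if_neg (by tauto)]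
      have h0 : s 0 = 0 := by
        rw [hs]
        simp only
        rw [Fintype.card_eq_zero_iff]
        exact ⟨fun w => w.2.1 rfl⟩
      rw [mul_zero, mul_zero, h0]
    · by_cases h1 : u ^ 3 + 1 = 0
      · rw [if_neg (by tauto)]
        have hz : ∀ v : F, v ^ 3 + 1 = 0 → s v = 0 := by
          intro v hv
          rw [hs]
          simp only
          rw [Fintype.card_eq_zero_iff]
          refine ⟨fun w => ?_⟩
          obtain ⟨w, hv0, hw0, heq⟩ := w
          have h0 : w ^ 3 * v = 0 := by linear_combination heq - hv
          rcases mul_eq_zero.mp h0 with h' | h'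
          · exact hw0 ((pow_eq_zero_iff (by norm_num)).mp h')
          · exact hv0 h'
        rw [hz u h1, hz _ (by linear_combination u ^ 3 * hz3 + h1),
          hz _ (by linear_combination (ζ ^ 3 + 1) * u ^ 3 * hz3 + h1)]
      · rw [if_pos ⟨hu, h1⟩]
        set t : F := -(u ^ 3 + 1) / u with hts
        have ht0 : t ≠ 0 := div_ne_zero (neg_ne_zero.mpr h1) hu
        have e1 : s u = Fintype.card {w : F // w ^ 3 = t} := hs_eq u hu h1
        have hzzu : ζ * u ≠ 0 := mul_ne_zero hz0 hu
        have hzz2u : ζ ^ 2 * u ≠ 0 := mul_ne_zero (pow_ne_zero 2 hz0) hu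
        have hc1 : (ζ * u) ^ 3 + 1 = u ^ 3 + 1 := by linear_combination u ^ 3 * hz3
        have hc2 : (ζ ^ 2 * u) ^ 3 + 1 = u ^ 3 + 1 := by
          linear_combination (ζ ^ 3 + 1) * u ^ 3 * hz3
        have e2 : s (ζ * u) = Fintype.card {w : F // w ^ 3 = ζ ^ 2 * t} := by
          rw [hs_eq _ hzzu (by rw [hc1]; exact h1)]
          apply Fintype.card_congr
          refine Equiv.subtypeEquiv (Equiv.refl F) fun w => ?_
          simp only [Equiv.refl_apply]
          rw [hc1, hts, show -(u ^ 3 + 1) / (ζ * u) = ζ ^ 2 * (-(u ^ 3 + 1) / u) from by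
            field_simp
            linear_combination hz3]
        have e3 : s (ζ ^ 2 * u) = Fintype.card {w : F // w ^ 3 = ζ * t} := by
          rw [hs_eq _ hzz2u (by rw [hc2]; exact h1)]
          apply Fintype.card_congr
          refine Equiv.subtypeEquiv (Equiv.refl F) fun w => ?_
          simp only [Equiv.refl_apply]
          rw [hc2, hts, show -(u ^ 3 + 1) / (ζ ^ 2 * u) = ζ * (-(u ^ 3 + 1) / u) from by
            field_simp
            linear_combination hz3]
        rw [e1, e2, e3]
        have hor : Fintype.card {w : F // w ^ 3 = t ∨ w ^ 3 = ζ * t ∨ w ^ 3 = ζ ^ 2 * t}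
            = 3 := by
          have e : {w : F // w ^ 3 = t ∨ w ^ 3 = ζ * t ∨ w ^ 3 = ζ ^ 2 * t}
              ≃ {w : F // w ^ 9 = t ^ 3} := by
            refine Equiv.subtypeEquiv (Equiv.refl F) fun w => ?_
            simp only [Equiv.refl_apply]
            have h := cube_roots_of_cube hz3 hz1 ht0 (w ^ 3)
            rw [show ((w ^ 3) ^ 3 : F) = w ^ 9 from by ring] at h
            exact h.symm
          rw [Fintype.card_congr e]
          exact card_nine h3 h9 hz3 hz1 ht0
        rw [Fintype.card_subtype_or_disjoint _ _ (disjoint_pred fun w ha hb => by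
            rcases hb with hb | hb
            · exact hz1 (mul_right_cancel₀ ht0
                (show ζ * t = 1 * t by rw [one_mul, ← hb]; exact ha))
            · exact hz21 (mul_right_cancel₀ ht0
                (show ζ ^ 2 * t = 1 * t by rw [one_mul, ← hb]; exact ha))),
          Fintype.card_subtype_or_disjoint _ _ (disjoint_pred fun w ha hb => by
            exact hzz (mul_right_cancel₀ ht0
              (show ζ * t = ζ ^ 2 * t by rw [← ha]; exact hb)))] at hor
        omega
  have hcard4 : Fintype.card {u : F // u ≠ 0 ∧ u ^ 3 + 1 ≠ 0} = Fintype.card F - 4 := by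
    have e : {u : F // u ≠ 0 ∧ u ^ 3 + 1 ≠ 0} ≃ {u : F // ¬(u = 0 ∨ u ^ 3 + 1 = 0)} := by
      refine Equiv.subtypeEquiv (Equiv.refl F) fun u => ?_
      simp only [Equiv.refl_apply]
      rw [not_or]
    rw [Fintype.card_congr e, Fintype.card_subtype_compl]
    congr 1
    have e2 : {u : F // u = 0 ∨ u ^ 3 + 1 = 0}
        ≃ {u : F // u = 0 ∨ u = -1 ∨ u = -ζ ∨ u = -ζ ^ 2} := by
      refine Equiv.subtypeEquiv (Equiv.refl F) fun u => ?_
      simp only [Equiv.refl_apply]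
      rw [show u ^ 3 + 1 = 0 ↔ u ^ 3 = -1 from by constructor <;> intro h <;> linear_combination h]
      rw [cube_eq_neg_one_iff hz3 hz1]
    rw [Fintype.card_congr e2]
    refine card_four ?_ ?_ ?_ ?_ ?_ ?_
    · exact fun h => (neg_ne_zero.mpr one_ne_zero) h.symm
    · exact fun h => (neg_ne_zero.mpr hz0) h.symm
    · exact fun h => (neg_ne_zero.mpr (pow_ne_zero 2 hz0)) h.symm
    · exact fun h => hz1 (by linear_combination h)
    · exact fun h => hz21 (by linear_combination h)
    · exact fun h => hzz (by linear_combination -h)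
  have hrw : ∑ u : F, (s u + s (ζ * u) + s (ζ ^ 2 * u)) = 3 * ∑ u : F, s u := by
    rw [Finset.sum_add_distrib, Finset.sum_add_distrib]
    have h1 : ∑ u : F, s (ζ * u) = ∑ u : F, s u :=
      Fintype.sum_equiv (Equiv.mulLeft₀ ζ hz0) _ _ (fun u => rfl)
    have h2 : ∑ u : F, s (ζ ^ 2 * u) = ∑ u : F, s u :=
      Fintype.sum_equiv (Equiv.mulLeft₀ (ζ ^ 2) (pow_ne_zero 2 hz0)) _ _ (fun u => rfl)
    rw [h1, h2]; ring
  have hite : ∑ u : F, (if u ≠ 0 ∧ u ^ 3 + 1 ≠ 0 then 3 else 0)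
      = 3 * (Fintype.card F - 4) := by
    rw [Finset.sum_ite, Finset.sum_const_zero, add_zero, Finset.sum_const, smul_eq_mul,
      mul_comm]
    congr 1
    rw [← hcard4, Fintype.card_subtype]
  have hfin : 3 * ∑ u : F, s u = 3 * (Fintype.card F - 4) := by
    rw [← hrw, Finset.sum_congr rfl fun u _ => key u, hite]
  omega

lemma card_cube_roots_neg_one_1 (h3 : Fintype.card F % 3 ≠ 1) :
    Fintype.card {z : F // z ^ 3 = -1} = 1 := by
  have hbij := cube_bijective (F := F) h3
  have e : {z : F // z ^ 3 = -1} ≃ {z : F // z = -1} := by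
    refine Equiv.subtypeEquiv (Equiv.refl F) fun z => ?_
    simp only [Equiv.refl_apply]
    constructor
    · intro h
      refine hbij.1 ?_
      simp only
      linear_combination h
    · rintro rfl; norm_num
  rw [Fintype.card_congr e, Fintype.card_subtype_eq]

lemma card_ne_zero' : Fintype.card {b : F // b ≠ 0} = Fintype.card F - 1 := by
  rw [Fintype.card_subtype_compl (p := fun b : F => b = 0), Fintype.card_subtype_eq]

/-- The five (disjoint) boundary strata, in coordinates `x = (a, b, c, d)`. -/
abbrev g4 (x : F × F × F × F) : F :=
  x.1 ^ 3 * x.2.1 + x.2.1 ^ 3 * x.2.2.1 + x.2.2.1 ^ 3 * x.2.2.2 + x.2.2.2 ^ 4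

abbrev Qaff (x : F × F × F × F) : Prop :=
  g4 x = 0 ∧ (x.1 = 0 ∨ x.2.1 = 0 ∨ x.2.2.1 = 0 ∨ x.2.2.2 = 0) ∧
    ¬(x.1 = 0 ∧ x.2.1 = 0 ∧ x.2.2.1 = 0 ∧ x.2.2.2 = 0)

abbrev C1a (x : F × F × F × F) : Prop :=
  x.2.2.2 = 0 ∧ x.2.1 = 0 ∧ ¬(x.1 = 0 ∧ x.2.2.1 = 0)

abbrev C1b (x : F × F × F × F) : Prop :=
  x.2.2.2 = 0 ∧ x.2.1 ≠ 0 ∧ x.2.2.1 = -x.1 ^ 3 / x.2.1 ^ 2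

abbrev C2 (x : F × F × F × F) : Prop :=
  x.2.2.2 ≠ 0 ∧ x.2.2.1 = 0 ∧ x.1 ≠ 0 ∧ x.2.1 = -x.2.2.2 ^ 4 / x.1 ^ 3

abbrev C3 (x : F × F × F × F) : Prop :=
  x.2.2.2 ≠ 0 ∧ x.2.2.1 ≠ 0 ∧ x.2.1 = 0 ∧ x.2.2.1 ^ 3 = -x.2.2.2 ^ 3

abbrev C4 (x : F × F × F × F) : Prop :=
  x.2.2.2 ≠ 0 ∧ x.2.2.1 ≠ 0 ∧ x.2.1 ≠ 0 ∧ x.1 = 0 ∧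
    x.2.1 ^ 3 * x.2.2.1 + x.2.2.1 ^ 3 * x.2.2.2 + x.2.2.2 ^ 4 = 0

lemma Qaff_iff (x : F × F × F × F) :
    Qaff x ↔ C1a x ∨ C1b x ∨ C2 x ∨ C3 x ∨ C4 x := by
  obtain ⟨a, b, c, d⟩ := x
  simp only [Qaff, g4, C1a, C1b, C2, C3, C4]
  constructor
  · rintro ⟨heq, hz, hnz⟩
    by_cases hd : d = 0
    · subst hd
      by_cases hb : b = 0
      · subst hb
        exact Or.inl ⟨rfl, rfl, fun h => hnz ⟨h.1, rfl, h.2, rfl⟩⟩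
      · refine Or.inr (Or.inl ⟨rfl, hb, ?_⟩)
        rw [eq_div_iff (pow_ne_zero 2 hb)]
        apply mul_right_cancel₀ hb
        linear_combination heq
    · by_cases hc : c = 0
      · subst hc
        have ha : a ≠ 0 := by
          intro h
          subst h
          exact hd ((pow_eq_zero_iff (n := 4) (by norm_num)).mp (by linear_combination heq))
        refine Or.inr (Or.inr (Or.inl ⟨hd, rfl, ha, ?_⟩))
        rw [eq_div_iff (pow_ne_zero 3 ha)]
        linear_combination heq
      · by_cases hb : b = 0
        · subst hb
          refine Or.inr (Or.inr (Or.inr (Or.inl ⟨hd, hc, rfl, ?_⟩)))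
          apply mul_right_cancel₀ hd
          linear_combination heq
        · have ha : a = 0 := by
            rcases hz with h | h | h | h
            · exact h
            · exact absurd h hb
            · exact absurd h hc
            · exact absurd h hd
          subst ha
          exact Or.inr (Or.inr (Or.inr (Or.inr ⟨hd, hc, hb, rfl, by linear_combination heq⟩)))
  · rintro (⟨hd, hb, h⟩ | ⟨hd, hb, hc⟩ | ⟨hd, hc, ha, hbv⟩ | ⟨hd, hc, hb, h3⟩ |
      ⟨hd, hc, hb, ha, heq⟩)
    · subst hd; subst hb
      exact ⟨by ring, Or.inr (Or.inl rfl), fun hh => h ⟨hh.1, hh.2.2.1⟩⟩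
    · subst hd; subst hc
      refine ⟨?_, Or.inr (Or.inr (Or.inr rfl)), fun hh => hb hh.2.1⟩
      field_simp
      try ring
    · subst hc; subst hbv
      refine ⟨?_, Or.inr (Or.inr (Or.inl rfl)), fun hh => hd hh.2.2.2⟩
      field_simp
      try ring
    · subst hb
      exact ⟨by linear_combination d * h3, Or.inr (Or.inl rfl), fun hh => hd hh.2.2.2⟩
    · subst ha
      exact ⟨by linear_combination heq, Or.inl rfl, fun hh => hd hh.2.2.2⟩

lemma card_C1a :
    Fintype.card {x : F × F × F × F // C1a x}
      = Fintype.card F * Fintype.card F - 1 := by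
  have e : {x : F × F × F × F // C1a x} ≃ {p : F × F // ¬(p.1 = 0 ∧ p.2 = 0)} :=
    { toFun := fun x => ⟨(x.1.1, x.1.2.2.1), x.2.2.2⟩
      invFun := fun p => ⟨(p.1.1, 0, p.1.2, 0), rfl, rfl, p.2⟩
      left_inv := by
        rintro ⟨⟨a, b, c, d⟩, hd, hb, h⟩
        exact Subtype.ext (Prod.ext rfl (Prod.ext hb.symm (Prod.ext rfl hd.symm)))
      right_inv := fun p => rfl }
  rw [Fintype.card_congr e, Fintype.card_subtype_compl, Fintype.card_prod]
  congr 1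
  have e2 : {p : F × F // p.1 = 0 ∧ p.2 = 0} ≃ {p : F × F // p = (0, 0)} := by
    refine Equiv.subtypeEquiv (Equiv.refl _) fun p => ?_
    simp only [Equiv.refl_apply, Prod.ext_iff]
  rw [Fintype.card_congr e2, Fintype.card_subtype_eq]

lemma card_C1b :
    Fintype.card {x : F × F × F × F // C1b x}
      = Fintype.card F * (Fintype.card F - 1) := by
  have e : {x : F × F × F × F // C1b x} ≃ F × {b : F // b ≠ 0} :=
    { toFun := fun x => (x.1.1, ⟨x.1.2.1, x.2.2.1⟩)
      invFun := fun p => ⟨(p.1, p.2.1, -p.1 ^ 3 / p.2.1 ^ 2, 0), rfl, p.2.2, rfl⟩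
      left_inv := by
        rintro ⟨⟨a, b, c, d⟩, hd, hb, hc⟩
        exact Subtype.ext (Prod.ext rfl (Prod.ext rfl (Prod.ext hc.symm hd.symm)))
      right_inv := fun p => rfl }
  rw [Fintype.card_congr e, Fintype.card_prod, card_ne_zero']

lemma card_C2 :
    Fintype.card {x : F × F × F × F // C2 x}
      = (Fintype.card F - 1) * (Fintype.card F - 1) := by
  have e : {x : F × F × F × F // C2 x} ≃ {d : F // d ≠ 0} × {a : F // a ≠ 0} :=
    { toFun := fun x => (⟨x.1.2.2.2, x.2.1⟩, ⟨x.1.1, x.2.2.2.1⟩)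
      invFun := fun p => ⟨(p.2.1, -p.1.1 ^ 4 / p.2.1 ^ 3, 0, p.1.1), p.1.2, rfl, p.2.2, rfl⟩
      left_inv := by
        rintro ⟨⟨a, b, c, d⟩, hd, hc, ha, hb⟩
        exact Subtype.ext (Prod.ext rfl (Prod.ext hb.symm (Prod.ext hc.symm rfl)))
      right_inv := fun p => rfl }
  rw [Fintype.card_congr e, Fintype.card_prod, card_ne_zero']

lemma card_C3 :
    Fintype.card {x : F × F × F × F // C3 x}
      = Fintype.card F * ((Fintype.card F - 1) * Fintype.card {z : F // z ^ 3 = -1}) := by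
  have e : {x : F × F × F × F // C3 x} ≃ F × {d : F // d ≠ 0} × {z : F // z ^ 3 = -1} :=
    { toFun := fun x => (x.1.1, ⟨x.1.2.2.2, x.2.1⟩,
        ⟨x.1.2.2.1 * x.1.2.2.2⁻¹, by
          obtain ⟨⟨a, b, c, d⟩, hd, hc, hb, h3⟩ := x
          field_simp
          linear_combination h3⟩)
      invFun := fun p => ⟨(p.1, 0, p.2.2.1 * p.2.1.1, p.2.1.1), p.2.1.2,
        mul_ne_zero (fun h0 => by
          have hzv := p.2.2.2
          rw [h0] at hzv
          exact one_ne_zero (α := F) (by linear_combination hzv)) p.2.1.2, rfl, by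
        rw [mul_pow, p.2.2.2, neg_one_mul]⟩
      left_inv := by
        rintro ⟨⟨a, b, c, d⟩, hd, hc, hb, h3⟩
        exact Subtype.ext (Prod.ext rfl (Prod.ext hb.symm
          (Prod.ext (inv_mul_cancel_right₀ hd c) rfl)))
      right_inv := by
        rintro ⟨a, ⟨d, hd⟩, ⟨z, hz⟩⟩
        exact Prod.ext rfl (Prod.ext rfl (Subtype.ext (mul_inv_cancel_right₀ hd z))) }
  rw [Fintype.card_congr e, Fintype.card_prod, Fintype.card_prod, card_ne_zero']

lemma card_C4 :
    Fintype.card {x : F × F × F × F // C4 x}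
      = (Fintype.card F - 1) * Fintype.card {p : F × F // Wc p} := by
  have e : {x : F × F × F × F // C4 x} ≃ {d : F // d ≠ 0} × {p : F × F // Wc p} :=
    { toFun := fun x => (⟨x.1.2.2.2, x.2.1⟩, ⟨(x.1.2.2.1 * x.1.2.2.2⁻¹, x.1.2.1 * x.1.2.2.2⁻¹), by
        obtain ⟨⟨a, b, c, d⟩, hd, hc, hb, ha, heq⟩ := x
        refine ⟨mul_ne_zero hc (inv_ne_zero hd), mul_ne_zero hb (inv_ne_zero hd), ?_⟩
        field_simp
        linear_combination heq⟩)
      invFun := fun p => ⟨(0, p.2.1.2 * p.1.1, p.2.1.1 * p.1.1, p.1.1), p.1.2,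
        mul_ne_zero p.2.2.1 p.1.2, mul_ne_zero p.2.2.2.1 p.1.2, rfl, by
        obtain ⟨⟨d, hd⟩, ⟨⟨u, w⟩, hu, hw, heq⟩⟩ := p
        simp only
        linear_combination d ^ 4 * heq⟩
      left_inv := by
        rintro ⟨⟨a, b, c, d⟩, hd, hc, hb, ha, heq⟩
        exact Subtype.ext (Prod.ext ha.symm (Prod.ext (inv_mul_cancel_right₀ hd b)
          (Prod.ext (inv_mul_cancel_right₀ hd c) rfl)))
      right_inv := by
        rintro ⟨⟨d, hd⟩, ⟨⟨u, w⟩, hu, hw, heq⟩⟩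
        exact Prod.ext rfl (Subtype.ext
          (Prod.ext (mul_inv_cancel_right₀ hd u) (mul_inv_cancel_right₀ hd w))) }
  rw [Fintype.card_congr e, Fintype.card_prod, card_ne_zero']

lemma card_Qaff_eq :
    Fintype.card {x : F × F × F × F // Qaff x}
      = (Fintype.card F * Fintype.card F - 1) + Fintype.card F * (Fintype.card F - 1)
        + (Fintype.card F - 1) * (Fintype.card F - 1)
        + Fintype.card F * ((Fintype.card F - 1) * Fintype.card {z : F // z ^ 3 = -1})
        + (Fintype.card F - 1) * Fintype.card {p : F × F // Wc p} := by
  rw [Fintype.card_congr (Equiv.subtypeEquiv (Equiv.refl _) fun x => by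
    simpa using Qaff_iff x)]
  rw [Fintype.card_subtype_or_disjoint _ _ (disjoint_pred fun x h1 h2 => by
      rcases h2 with h | h | h | h
      · exact h.2.1 h1.2.1
      · exact h.1 h1.1
      · exact h.1 h1.1
      · exact h.1 h1.1)]
  rw [Fintype.card_subtype_or_disjoint _ _ (disjoint_pred fun x h1 h2 => by
      rcases h2 with h | h | h
      · exact h.1 h1.1
      · exact h.1 h1.1
      · exact h.1 h1.1)]
  rw [Fintype.card_subtype_or_disjoint _ _ (disjoint_pred fun x h1 h2 => by
      rcases h2 with h | h
      · exact h.2.1 h1.2.1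
      · exact h.2.1 h1.2.1)]
  rw [Fintype.card_subtype_or_disjoint _ _ (disjoint_pred fun x h1 h2 => by
      exact h2.2.2.1 h1.2.2.1)]
  rw [card_C1a, card_C1b, card_C2, card_C3, card_C4]
  ring

end C4Aux

namespace C4Aux

variable {F : Type} [Field F] [Fintype F]

def tupleEquiv : (Fin 4 → F) ≃ F × F × F × F where
  toFun v := (v 0, v 1, v 2, v 3)
  invFun p := ![p.1, p.2.1, p.2.2.1, p.2.2.2]
  left_inv v := by
    funext i
    fin_cases i <;> rfl
  right_inv p := rfl

noncomputable def vset_equiv (ψ : F) :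
    {v : Fin 4 → F // v ≠ 0 ∧ fC4 ψ v = 0 ∧ ∃ j, v j = 0}
      ≃ {x : F × F × F × F // Qaff x} := by
  refine Equiv.subtypeEquiv tupleEquiv fun v => ?_
  simp only [tupleEquiv, Equiv.coe_fn_mk, Qaff, g4]
  constructor
  · rintro ⟨hv0, heq, j, hj⟩
    have hdisj : v 0 = 0 ∨ v 1 = 0 ∨ v 2 = 0 ∨ v 3 = 0 := by
      fin_cases j <;> tauto
    have hp : v 0 * v 1 * v 2 * v 3 = 0 := by
      rcases hdisj with h | h | h | h <;> rw [h] <;> ring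
    refine ⟨?_, hdisj, ?_⟩
    · have heq' : v 0 ^ 3 * v 1 + v 1 ^ 3 * v 2 + v 2 ^ 3 * v 3 + v 3 ^ 4 -
          27 * ψ * (v 0 * v 1 * v 2 * v 3) = 0 := heq
      linear_combination heq' + 27 * ψ * hp
    · rintro ⟨h0, h1, h2, h3⟩
      apply hv0
      funext i
      fin_cases i <;> assumption
  · rintro ⟨heq, hdisj, hnz⟩
    have hp : v 0 * v 1 * v 2 * v 3 = 0 := by
      rcases hdisj with h | h | h | h <;> [rw [show v 0 = 0 from h]; rw [show v 1 = 0 from h];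
        rw [show v 2 = 0 from h]; rw [show v 3 = 0 from h]] <;> ring
    refine ⟨?_, ?_, ?_⟩
    · intro h0
      exact hnz ⟨by rw [h0]; rfl, by rw [h0]; rfl, by rw [h0]; rfl, by rw [h0]; rfl⟩
    · show v 0 ^ 3 * v 1 + v 1 ^ 3 * v 2 + v 2 ^ 3 * v 3 + v 3 ^ 4 -
          27 * ψ * (v 0 * v 1 * v 2 * v 3) = 0
      linear_combination heq - 27 * ψ * hp
    · rcases hdisj with h | h | h | h
      · exact ⟨0, h⟩
      · exact ⟨1, h⟩
      · exact ⟨2, h⟩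
      · exact ⟨3, h⟩

lemma stepA (ψ : F) :
    Nat.card {v : Fin 4 → F // v ≠ 0 ∧ fC4 ψ v = 0 ∧ ∃ j, v j = 0}
      = Nat.card (C4boundary F ψ) * (Fintype.card F - 1) := by
  classical
  have hscale : ∀ (c : F) (v : Fin 4 → F), fC4 ψ (c • v) = c ^ 4 * fC4 ψ v := by
    intro c v
    simp only [fC4, Pi.smul_apply, smul_eq_mul]
    ring
  have key : ∀ (P : C4boundary F ψ) (c : Fˣ),
      (c : F) • P.1.rep ≠ 0 ∧ fC4 ψ ((c : F) • P.1.rep) = 0 ∧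
        ∃ j, ((c : F) • P.1.rep) j = 0 := by
    rintro ⟨P, hf, j, hj⟩ c
    refine ⟨smul_ne_zero (Units.ne_zero c) P.rep_nonzero, ?_, ⟨j, ?_⟩⟩
    · rw [hscale, hf, mul_zero]
    · simp [Pi.smul_apply, hj]
  let Φ : C4boundary F ψ × Fˣ → {v : Fin 4 → F // v ≠ 0 ∧ fC4 ψ v = 0 ∧ ∃ j, v j = 0} :=
    fun Pc => ⟨(Pc.2 : F) • Pc.1.1.rep, key Pc.1 Pc.2⟩
  have hbij : Function.Bijective Φ := by
    constructor
    · rintro ⟨P, c⟩ ⟨P', c'⟩ h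
      have hv : (c : F) • P.1.rep = (c' : F) • P'.1.rep := congrArg Subtype.val h
      have hP : P.1 = P'.1 := by
        conv_lhs => rw [← P.1.mk_rep]
        conv_rhs => rw [← P'.1.mk_rep]
        rw [Projectivization.mk_eq_mk_iff]
        refine ⟨c⁻¹ * c', ?_⟩
        rw [Units.smul_def, Units.val_mul, mul_smul]
        show ((c⁻¹ : Fˣ) : F) • ((c' : F) • P'.1.rep) = P.1.rep
        rw [← hv, smul_smul]
        have : ((c⁻¹ : Fˣ) : F) * (c : F) = 1 := by
          rw [← Units.val_mul, inv_mul_cancel]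
          rfl
        rw [this, one_smul]
      obtain ⟨j, hj⟩ : ∃ j, P.1.rep j ≠ 0 := by
        by_contra hno
        push_neg at hno
        exact P.1.rep_nonzero (funext fun i => hno i)
      have hcc : (c : F) = (c' : F) := by
        have := congrFun hv j
        simp only [Pi.smul_apply, smul_eq_mul, hP] at this
        exact mul_right_cancel₀ (by rw [← hP]; exact hj) this
      have hc : c = c' := Units.ext hcc
      have hPP : P = P' := Subtype.ext hP
      rw [hPP, hc]
    · rintro ⟨v, hv0, hf, j, hj⟩
      obtain ⟨a, ha⟩ := Projectivization.exists_smul_eq_mk_rep F v hv0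
      have hmem : Projectivization.mk F v hv0 ∈ C4boundary F ψ := by
        constructor
        · rw [← ha, Units.smul_def, hscale, hf, mul_zero]
        · refine ⟨j, ?_⟩
          rw [← ha, Units.smul_def]
          simp [Pi.smul_apply, hj]
      refine ⟨(⟨Projectivization.mk F v hv0, hmem⟩, a⁻¹), ?_⟩
      apply Subtype.ext
      show ((a⁻¹ : Fˣ) : F) • (Projectivization.mk F v hv0).rep = v
      rw [← ha, Units.smul_def, smul_smul]
      have : ((a⁻¹ : Fˣ) : F) * (a : F) = 1 := by
        rw [← Units.val_mul, inv_mul_cancel]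
        rfl
      rw [this, one_smul]
  rw [Nat.card_congr (Equiv.ofBijective Φ hbij).symm, Nat.card_prod]
  congr 1
  rw [Nat.card_units, Nat.card_eq_fintype_card]

end C4Aux

/-- The number of points on the `C4` pencil in `ℙ³(F_q)` with at least one zero
coordinate is `5q - 2` if `q ≢ 1 (mod 3)`, and `7q - 4` if `q ≡ 1 (mod 3)` but
`q ≢ 1 (mod 9)`. -/
theorem C4_boundary_count (F : Type) [Field F] [Fintype F]
    (hodd : Odd (Fintype.card F)) (ψ : F) :
    (Fintype.card F % 3 ≠ 1 →
      Nat.card (C4boundary F ψ) = 5 * Fintype.card F - 2) ∧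
    (Fintype.card F % 3 = 1 → Fintype.card F % 9 ≠ 1 →
      Nat.card (C4boundary F ψ) = 7 * Fintype.card F - 4) := by
  classical
  have h2 : 2 ≤ Fintype.card F := Fintype.one_lt_card
  have hq2 : Fintype.card F % 2 = 1 := Nat.odd_iff.mp hodd
  have e1 : (1:ℕ) ≤ Fintype.card F * Fintype.card F :=
    Nat.one_le_iff_ne_zero.mpr (Nat.mul_ne_zero (by omega) (by omega))
  have hpos : 0 < Fintype.card F - 1 := by omega
  constructor
  · intro h3
    have hT : Nat.card {v : Fin 4 → F // v ≠ 0 ∧ fC4 ψ v = 0 ∧ ∃ j, v j = 0}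
        = (5 * Fintype.card F - 2) * (Fintype.card F - 1) := by
      rw [Nat.card_congr (C4Aux.vset_equiv ψ), Nat.card_eq_fintype_card,
        C4Aux.card_Qaff_eq, C4Aux.card_cube_roots_neg_one_1 h3, C4Aux.card_W_one h3]
      have s1 : 1 ≤ Fintype.card F := by omega
      have s2 : 2 ≤ Fintype.card F := by omega
      have s5 : 2 ≤ 5 * Fintype.card F := by omega
      zify [e1, s1, s2, s5]
      ring
    have hA := C4Aux.stepA (F := F) ψ
    rw [hT] at hA
    exact Nat.eq_of_mul_eq_mul_right hpos hA.symm
  · intro h3 h9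
    obtain ⟨ζ, hz3, hz1⟩ := C4Aux.exists_zeta h3
    have hq7 : 7 ≤ Fintype.card F := by omega
    have hT : Nat.card {v : Fin 4 → F // v ≠ 0 ∧ fC4 ψ v = 0 ∧ ∃ j, v j = 0}
        = (7 * Fintype.card F - 4) * (Fintype.card F - 1) := by
      rw [Nat.card_congr (C4Aux.vset_equiv ψ), Nat.card_eq_fintype_card,
        C4Aux.card_Qaff_eq, C4Aux.card_cube_roots_neg_one hz3 hz1,
        C4Aux.card_W_two h3 h9]
      have s1 : 1 ≤ Fintype.card F := by omega
      have s4 : 4 ≤ Fintype.card F := by omega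
      have s7 : 4 ≤ 7 * Fintype.card F := by omega
      zify [e1, s1, s4, s7]
      ring
    have hA := C4Aux.stepA (F := F) ψ
    rw [hT] at hA
    exact Nat.eq_of_mul_eq_mul_right hpos hA.symm
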